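/- For every positive integer m, as formal power series in q: ∑_{n≥0} q^{2mn} (q^{2mn+2m};q^{2m})_∞ (-q^{2mn+1};q^2)_∞ = 1 + ∑_{k≥1} q^{k^2} ∏_{j=1}^k (1 + q^{2j} + q^{4j} + ... + q^{2(m-1)j}). -/

import Mathlib

open Finset PowerSeries

namespace AndrewsAux

noncomputable section

abbrev S : Type := PowerSeries ℤ

/-- The truncation quotient map. -/
def pim (N : ℕ) : S →+* S ⧸ Ideal.span {(PowerSeries.X : S) ^ (N+1)} :=
  Ideal.Quotient.mk _

lemma pim_eq_iff {N : ℕ} {a b : S} :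
    pim N a = pim N b ↔ (PowerSeries.X : S) ^ (N+1) ∣ a - b := by
  rw [pim, Ideal.Quotient.mk_eq_mk_iff_sub_mem, Ideal.mem_span_singleton]

lemma coeff_congr {N : ℕ} {a b : S} (h : pim N a = pim N b) :
    PowerSeries.coeff (R := ℤ) N a = PowerSeries.coeff (R := ℤ) N b := by
  rw [pim_eq_iff] at h
  have := PowerSeries.X_pow_dvd_iff.1 h N (Nat.lt_succ_self N)
  rw [map_sub, sub_eq_zero] at this
  exact this

lemma pim_X_pow {N s : ℕ} (h : N < s) : pim N ((PowerSeries.X : S) ^ s) = 0 := by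
  rw [pim, Ideal.Quotient.eq_zero_iff_mem, Ideal.mem_span_singleton]
  exact pow_dvd_pow _ h

lemma pim_one_sub {N s : ℕ} (h : N < s) :
    pim N (1 - (PowerSeries.X : S) ^ s) = 1 := by
  rw [map_sub, map_one, pim_X_pow h, sub_zero]

lemma pim_one_add {N s : ℕ} (h : N < s) :
    pim N (1 + (PowerSeries.X : S) ^ s) = 1 := by
  rw [map_add, map_one, pim_X_pow h, add_zero]

/-- The truncated product `∏_{i=s+1}^{t} (1 - X^{c i})`. -/
def D (c s t : ℕ) : S := ∏ i ∈ Ioc s t, (1 - (PowerSeries.X : S) ^ (c * i))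

lemma D_mul {c s k t : ℕ} (h1 : s ≤ k) (h2 : k ≤ t) :
    D c s k * D c k t = D c s t :=
  prod_Ioc_consecutive _ h1 h2

lemma D_succ_bot {c k t : ℕ} (h : k < t) :
    D c k t = (1 - (PowerSeries.X : S) ^ (c * (k+1))) * D c (k+1) t := by
  rw [← D_mul (Nat.le_succ k) h, D, Nat.Ioc_succ_singleton, prod_singleton]

lemma pim_D_high {N c s t : ℕ} (hc : 1 ≤ c) (h : N ≤ s) : pim N (D c s t) = 1 := by
  rw [D, map_prod]
  refine prod_eq_one fun i hi => ?_
  have hi' := (mem_Ioc.1 hi).1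
  exact pim_one_sub (by nlinarith)

lemma pim_D_trunc {N c s t : ℕ} (hc : 1 ≤ c) (hs : s ≤ N) (ht : N ≤ t) :
    pim N (D c s t) = pim N (D c s N) := by
  rw [← D_mul hs ht, map_mul, pim_D_high hc le_rfl, mul_one]

lemma constantCoeff_D {c : ℕ} (hc : 1 ≤ c) (s t : ℕ) : constantCoeff (R := ℤ) (D c s t) = 1 := by
  rw [D, map_prod]
  refine prod_eq_one fun i hi => ?_
  have hi' := (mem_Ioc.1 hi).1
  rw [map_sub, map_one, map_pow, constantCoeff_X,
    zero_pow (Nat.mul_ne_zero (by omega) (by omega)), sub_zero]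

lemma isUnit_pim_D {N c s t : ℕ} (hc : 1 ≤ c) : IsUnit (pim N (D c s t)) := by
  refine IsUnit.map _ ?_
  rw [PowerSeries.isUnit_iff_constantCoeff, constantCoeff_D hc]
  exact isUnit_one

/-- triangle number as a sum -/
def tri (k : ℕ) : ℕ := ∑ i ∈ range k, i

lemma tri_succ (k : ℕ) : tri (k+1) = tri k + k := Finset.sum_range_succ _ _

lemma sq_eq_tri (k : ℕ) : k + 2 * tri k = k ^ 2 := by
  have h := Finset.sum_range_id_mul_two k
  rw [tri]
  cases k with
  | zero => simp
  | succ n =>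
    simp only [Nat.succ_sub_one] at h
    nlinarith [h]


lemma down_induction {N c : ℕ} (hc : 1 ≤ c) (P : ℕ → Prop)
    (base : ∀ a, N < a → P a) (step : ∀ a, 1 ≤ a → P (a + c) → P a) :
    ∀ a, 1 ≤ a → P a := by
  have key : ∀ d a, 1 ≤ a → N < a + d → P a := by
    intro d
    induction d with
    | zero => intro a ha h; exact base a (by omega)
    | succ d ih =>
      intro a ha h
      rcases lt_or_ge N a with h' | h'
      · exact base a h'
      · exact step a ha (ih (a + c) (by omega) (by omega))
  intro a ha
  exact key (N + 1) a ha (by omega)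

lemma lemA {N c : ℕ} (hc : 1 ≤ c) : ∀ a, 1 ≤ a →
    pim N ((∏ j ∈ range (N+1), (1 + (PowerSeries.X : S) ^ (a + c * j))) * D c 0 N)
    = pim N (∑ k ∈ range (N+1), (PowerSeries.X : S) ^ (a * k + c * tri k) * D c k N) := by
  refine down_induction (N := N) hc _ ?base ?step
  case base =>
    intro a ha
    have hprod : pim N (∏ j ∈ range (N+1), (1 + (PowerSeries.X : S) ^ (a + c * j))) = 1 := by
      rw [map_prod]
      exact prod_eq_one fun j _ => pim_one_add (by omega)
    have hsum : pim N (∑ k ∈ range (N+1), (PowerSeries.X : S) ^ (a * k + c * tri k) * D c k N)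
        = pim N (D c 0 N) := by
      rw [map_sum, Finset.sum_eq_single_of_mem 0 (mem_range.2 (by omega))]
      · simp [tri]
      · intro k _ hk
        have h1 : 1 ≤ k := Nat.one_le_iff_ne_zero.2 hk
        rw [map_mul, pim_X_pow (by nlinarith), zero_mul]
    rw [map_mul, hprod, one_mul, hsum]
  case step =>
    intro a ha IH
    -- product-side recursion
    have e12 : (∏ j ∈ range (N+1), (1 + (PowerSeries.X : S) ^ (a + c * j)))
          * (1 + (PowerSeries.X : S) ^ (a + c * (N+1)))
        = (1 + (PowerSeries.X : S) ^ a)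
          * ∏ j ∈ range (N+1), (1 + (PowerSeries.X : S) ^ ((a + c) + c * j)) := by
      rw [← prod_range_succ (fun j => 1 + (PowerSeries.X : S) ^ (a + c * j)) (N+1),
        prod_range_succ' (fun j => 1 + (PowerSeries.X : S) ^ (a + c * j)) (N+1)]
      rw [mul_comm]
      congr 1
      exact prod_congr rfl fun j _ => by congr 2; ring
    have hP : pim N ((∏ j ∈ range (N+1), (1 + (PowerSeries.X : S) ^ (a + c * j))) * D c 0 N)
        = pim N (1 + (PowerSeries.X : S) ^ a)
          * pim N ((∏ j ∈ range (N+1), (1 + (PowerSeries.X : S) ^ ((a + c) + c * j))) * D c 0 N) := by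
      have : pim N ((∏ j ∈ range (N+1), (1 + (PowerSeries.X : S) ^ (a + c * j)))
            * (1 + (PowerSeries.X : S) ^ (a + c * (N+1))))
          = pim N (∏ j ∈ range (N+1), (1 + (PowerSeries.X : S) ^ (a + c * j))) := by
        rw [map_mul, pim_one_add (by nlinarith), mul_one]
      rw [map_mul, ← this, e12, map_mul, map_mul, mul_assoc]
    rw [hP, IH]
    -- sum-side recursion
    have key : ∀ k ∈ range N,
        (PowerSeries.X : S) ^ (a * (k+1) + c * tri (k+1)) * D c (k+1) N
        = (PowerSeries.X : S) ^ ((a+c) * (k+1) + c * tri (k+1)) * D c (k+1) N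
          + (PowerSeries.X : S) ^ (a * (k+1) + c * tri (k+1)) * D c k N := by
      intro k hk
      have hkN : k < N := mem_range.1 hk
      rw [D_succ_bot hkN, show (a+c)*(k+1) + c * tri (k+1) = (a*(k+1) + c*tri (k+1)) + c*(k+1) from by ring,
        pow_add]
      ring
    have hsplit : ∀ b : ℕ, ∑ k ∈ range (N+1), (PowerSeries.X : S) ^ (b * k + c * tri k) * D c k N
        = D c 0 N + ∑ k ∈ range N, (PowerSeries.X : S) ^ (b * (k+1) + c * tri (k+1)) * D c (k+1) N := by
      intro b
      rw [Finset.sum_range_succ' (fun k => (PowerSeries.X : S) ^ (b * k + c * tri k) * D c k N) N]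
      simp [tri, add_comm]
    rw [hsplit a, hsplit (a+c)]
    have hXsum : pim N ((PowerSeries.X : S) ^ a
          * ∑ k ∈ range (N+1), (PowerSeries.X : S) ^ ((a+c) * k + c * tri k) * D c k N)
        = pim N (∑ k ∈ range N, (PowerSeries.X : S) ^ (a * (k+1) + c * tri (k+1)) * D c k N) := by
      rw [Finset.mul_sum]
      have : ∀ k : ℕ, (PowerSeries.X : S) ^ a * ((PowerSeries.X : S) ^ ((a+c) * k + c * tri k) * D c k N)
          = (PowerSeries.X : S) ^ (a * (k+1) + c * tri (k+1)) * D c k N := by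
        intro k
        rw [← mul_assoc, ← pow_add]
        congr 2
        rw [tri_succ]; ring
      simp only [this]
      rw [Finset.sum_range_succ, map_add, map_mul,
        pim_X_pow (show N < a * (N+1) + c * tri (N+1) from by nlinarith), zero_mul, add_zero]
    calc pim N (1 + (PowerSeries.X : S) ^ a)
          * pim N (D c 0 N + ∑ k ∈ range N, (PowerSeries.X : S) ^ ((a+c) * (k+1) + c * tri (k+1)) * D c (k+1) N)
        = pim N (D c 0 N + ∑ k ∈ range N, (PowerSeries.X : S) ^ ((a+c) * (k+1) + c * tri (k+1)) * D c (k+1) N)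
          + pim N ((PowerSeries.X : S) ^ a
            * ∑ k ∈ range (N+1), (PowerSeries.X : S) ^ ((a+c) * k + c * tri k) * D c k N) := by
          rw [← hsplit (a+c), ← map_mul, ← map_add, add_mul, one_mul, mul_comm ((PowerSeries.X : S)^a)]
      _ = pim N (D c 0 N + ∑ k ∈ range N, (PowerSeries.X : S) ^ ((a+c) * (k+1) + c * tri (k+1)) * D c (k+1) N)
          + pim N (∑ k ∈ range N, (PowerSeries.X : S) ^ (a * (k+1) + c * tri (k+1)) * D c k N) := by
          rw [hXsum]
      _ = pim N (D c 0 N + ∑ k ∈ range N, (PowerSeries.X : S) ^ (a * (k+1) + c * tri (k+1)) * D c (k+1) N) := by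
          rw [← map_add]
          congr 1
          rw [add_assoc, ← Finset.sum_add_distrib]
          congr 1
          exact (Finset.sum_congr rfl key).symm


lemma lemB {N c : ℕ} (hc : 1 ≤ c) : ∀ a, 1 ≤ a →
    pim N ((∑ k ∈ range (N+1), (PowerSeries.X : S) ^ (a * k) * D c k N)
      * ∏ j ∈ range (N+1), (1 - (PowerSeries.X : S) ^ (a + c * j)))
    = pim N (D c 0 N) := by
  refine down_induction (N := N) hc _ ?base ?step
  case base =>
    intro a ha
    have hprod : pim N (∏ j ∈ range (N+1), (1 - (PowerSeries.X : S) ^ (a + c * j))) = 1 := by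
      rw [map_prod]
      exact prod_eq_one fun j _ => pim_one_sub (by omega)
    have hsum : pim N (∑ k ∈ range (N+1), (PowerSeries.X : S) ^ (a * k) * D c k N)
        = pim N (D c 0 N) := by
      rw [map_sum, Finset.sum_eq_single_of_mem 0 (mem_range.2 (by omega))]
      · simp
      · intro k _ hk
        have h1 : 1 ≤ k := Nat.one_le_iff_ne_zero.2 hk
        rw [map_mul, pim_X_pow (by nlinarith), zero_mul]
    rw [map_mul, hprod, mul_one, hsum]
  case step =>
    intro a ha IH
    have e12 : (∏ j ∈ range (N+1), (1 - (PowerSeries.X : S) ^ (a + c * j)))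
          * (1 - (PowerSeries.X : S) ^ (a + c * (N+1)))
        = (1 - (PowerSeries.X : S) ^ a)
          * ∏ j ∈ range (N+1), (1 - (PowerSeries.X : S) ^ ((a + c) + c * j)) := by
      rw [← prod_range_succ (fun j => 1 - (PowerSeries.X : S) ^ (a + c * j)) (N+1),
        prod_range_succ' (fun j => 1 - (PowerSeries.X : S) ^ (a + c * j)) (N+1)]
      rw [mul_comm]
      congr 1
      exact prod_congr rfl fun j _ => by congr 2; ring
    have hsumrec : pim N ((1 - (PowerSeries.X : S) ^ a)
          * ∑ k ∈ range (N+1), (PowerSeries.X : S) ^ (a * k) * D c k N)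
        = pim N (∑ k ∈ range (N+1), (PowerSeries.X : S) ^ ((a+c) * k) * D c k N) := by
      have hsplit : ∀ b : ℕ, ∑ k ∈ range (N+1), (PowerSeries.X : S) ^ (b * k) * D c k N
          = D c 0 N + ∑ k ∈ range N, (PowerSeries.X : S) ^ (b * (k+1)) * D c (k+1) N := by
        intro b
        rw [Finset.sum_range_succ' (fun k => (PowerSeries.X : S) ^ (b * k) * D c k N) N]
        simp [add_comm]
      have hXsum : pim N ((PowerSeries.X : S) ^ a
            * ∑ k ∈ range (N+1), (PowerSeries.X : S) ^ (a * k) * D c k N)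
          = pim N (∑ k ∈ range N, (PowerSeries.X : S) ^ (a * (k+1)) * D c k N) := by
        rw [Finset.mul_sum]
        have : ∀ k : ℕ, (PowerSeries.X : S) ^ a * ((PowerSeries.X : S) ^ (a * k) * D c k N)
            = (PowerSeries.X : S) ^ (a * (k+1)) * D c k N := by
          intro k
          rw [← mul_assoc, ← pow_add]
          congr 2
          ring
        simp only [this]
        rw [Finset.sum_range_succ, map_add, map_mul,
          pim_X_pow (show N < a * (N+1) from by nlinarith), zero_mul, add_zero]
      have key : ∀ k ∈ range N,
          (PowerSeries.X : S) ^ (a * (k+1)) * D c (k+1) N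
            - (PowerSeries.X : S) ^ (a * (k+1)) * D c k N
          = (PowerSeries.X : S) ^ ((a+c) * (k+1)) * D c (k+1) N := by
        intro k hk
        have hkN : k < N := mem_range.1 hk
        rw [D_succ_bot hkN, show (a+c)*(k+1) = a*(k+1) + c*(k+1) from by ring, pow_add]
        ring
      rw [sub_mul, one_mul, map_sub, hXsum, hsplit a, hsplit (a+c), map_add, map_add,
        add_sub_assoc, ← map_sub, ← Finset.sum_sub_distrib]
      congr 2
      exact Finset.sum_congr rfl key
    have hextra : pim N ((∑ k ∈ range (N+1), (PowerSeries.X : S) ^ (a * k) * D c k N)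
          * ∏ j ∈ range (N+1), (1 - (PowerSeries.X : S) ^ (a + c * j)))
        = pim N ((∑ k ∈ range (N+1), (PowerSeries.X : S) ^ (a * k) * D c k N)
          * ((∏ j ∈ range (N+1), (1 - (PowerSeries.X : S) ^ (a + c * j)))
            * (1 - (PowerSeries.X : S) ^ (a + c * (N+1))))) := by
      rw [map_mul, map_mul (pim N), map_mul, pim_one_sub (by nlinarith), mul_one]
    rw [hextra, e12, show (∑ k ∈ range (N+1), (PowerSeries.X : S) ^ (a * k) * D c k N)
        * ((1 - (PowerSeries.X : S) ^ a)
          * ∏ j ∈ range (N+1), (1 - (PowerSeries.X : S) ^ ((a + c) + c * j)))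
      = ((1 - (PowerSeries.X : S) ^ a)
          * ∑ k ∈ range (N+1), (PowerSeries.X : S) ^ (a * k) * D c k N)
        * ∏ j ∈ range (N+1), (1 - (PowerSeries.X : S) ^ ((a + c) + c * j)) from by ring,
      map_mul, hsumrec, ← map_mul]
    exact IH


lemma prod_shift (c s t : ℕ) :
    (∏ j ∈ range t, (1 - (PowerSeries.X : S) ^ (c * (s + 1 + j)))) = D c s (s + t) := by
  rw [D, show Ioc s (s+t) = Ico (s+1) (s+1+t) from by ext x; simp only [mem_Ioc, mem_Ico]; omega,
    prod_Ico_eq_prod_range, show s+1+t - (s+1) = t from by omega]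

lemma geom_aux (m j : ℕ) :
    (∑ i ∈ range m, (PowerSeries.X : S) ^ (2*i*j)) * (1 - (PowerSeries.X : S) ^ (2*j))
      = 1 - (PowerSeries.X : S) ^ (2*m*j) := by
  have h := geom_sum_mul ((PowerSeries.X : S) ^ (2*j)) m
  have e : ∀ i, ((PowerSeries.X : S) ^ (2*j)) ^ i = (PowerSeries.X : S) ^ (2*i*j) := fun i => by
    rw [← pow_mul]; congr 1; ring
  calc (∑ i ∈ range m, (PowerSeries.X : S) ^ (2*i*j)) * (1 - (PowerSeries.X : S) ^ (2*j))
      = -((∑ i ∈ range m, ((PowerSeries.X : S) ^ (2*j)) ^ i)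
          * ((PowerSeries.X : S) ^ (2*j) - 1)) := by simp only [e]; ring
    _ = 1 - (PowerSeries.X : S) ^ (2*m*j) := by
        rw [h, ← pow_mul, show 2*j*m = 2*m*j from by ring]; ring

lemma Ioc_zero_eq_Icc (k : ℕ) : Ioc 0 k = Icc 1 k := by
  ext x; simp only [mem_Ioc, mem_Icc]; omega


theorem main_thm (m : ℕ) (hm : 0 < m) (N : ℕ) :
    PowerSeries.coeff (R := ℤ) N
      (∑ n ∈ Finset.range (N + 1),
        PowerSeries.X ^ (2 * m * n) *
          (∏ j ∈ Finset.range (N + 1),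
            (1 - PowerSeries.X ^ (2 * m * n + 2 * m + 2 * m * j))) *
          (∏ j ∈ Finset.range (N + 1),
            (1 + PowerSeries.X ^ (2 * m * n + 1 + 2 * j)))) =
    PowerSeries.coeff (R := ℤ) N
      (1 + ∑ k ∈ Finset.Icc 1 N,
        PowerSeries.X ^ (k ^ 2) *
          ∏ j ∈ Finset.Icc 1 k, ∑ i ∈ Finset.range m, PowerSeries.X ^ (2 * i * j)) := by
  have hm2 : 1 ≤ 2 * m := by omega
  apply coeff_congr
  -- auxiliary congruences
  have hA : ∀ n, n ≤ N →
      pim N (∏ j ∈ Finset.range (N+1),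
        (1 - (PowerSeries.X : S) ^ (2*m*n + 2*m + 2*m*j))) = pim N (D (2*m) n N) := by
    intro n hn
    have e : (∏ j ∈ Finset.range (N+1), (1 - (PowerSeries.X : S) ^ (2*m*n + 2*m + 2*m*j)))
        = D (2*m) n (n + (N+1)) := by
      rw [← prod_shift (2*m) n (N+1)]
      exact prod_congr rfl fun j _ => by congr 2; ring
    rw [e, ← D_mul hn (show N ≤ n + (N+1) from by omega), map_mul,
      pim_D_high hm2 le_rfl, mul_one]
  have hB : ∀ n,
      pim N ((∏ j ∈ Finset.range (N+1), (1 + (PowerSeries.X : S) ^ (2*m*n + 1 + 2*j))) * D 2 0 N)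
        = pim N (∑ k ∈ Finset.range (N+1),
            (PowerSeries.X : S) ^ (k^2 + 2*m*n*k) * D 2 k N) := by
    intro n
    have h := lemA (N := N) (c := 2) (by omega) (2*m*n + 1) (by omega)
    rw [h]
    exact congrArg _ (Finset.sum_congr rfl fun k _ => by
      rw [show (2*m*n+1)*k + 2*tri k = k^2 + 2*m*n*k from by rw [← sq_eq_tri k]; ring])
  have hLB : ∀ k, k ≤ N →
      pim N ((∑ n ∈ Finset.range (N+1),
          (PowerSeries.X : S) ^ (2*m*(k+1)*n) * D (2*m) n N) * D (2*m) k N)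
        = pim N (D (2*m) 0 N) := by
    intro k hk
    have h := lemB (N := N) (c := 2*m) hm2 (2*m*(k+1)) (by nlinarith)
    have e : (∏ j ∈ Finset.range (N+1), (1 - (PowerSeries.X : S) ^ (2*m*(k+1) + 2*m*j)))
        = D (2*m) k (k + (N+1)) := by
      rw [← prod_shift (2*m) k (N+1)]
      exact prod_congr rfl fun j _ => by congr 2; ring
    rw [e, ← D_mul hk (show N ≤ k + (N+1) from by omega)] at h
    calc pim N ((∑ n ∈ Finset.range (N+1),
            (PowerSeries.X : S) ^ (2*m*(k+1)*n) * D (2*m) n N) * D (2*m) k N)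
        = pim N ((∑ n ∈ Finset.range (N+1),
            (PowerSeries.X : S) ^ (2*m*(k+1)*n) * D (2*m) n N) * D (2*m) k N)
            * pim N (D (2*m) N (k+(N+1))) := by rw [pim_D_high hm2 le_rfl, mul_one]
      _ = pim N ((∑ n ∈ Finset.range (N+1),
            (PowerSeries.X : S) ^ (2*m*(k+1)*n) * D (2*m) n N)
            * (D (2*m) k N * D (2*m) N (k+(N+1)))) := by rw [← map_mul, mul_assoc]
      _ = pim N (D (2*m) 0 N) := h
  -- RHS times F2, exact identity
  have hR : (1 + ∑ k ∈ Finset.Icc 1 N, (PowerSeries.X : S) ^ (k ^ 2) *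
        ∏ j ∈ Finset.Icc 1 k, ∑ i ∈ Finset.range m, (PowerSeries.X : S) ^ (2 * i * j)) * D 2 0 N
      = ∑ k ∈ Finset.range (N+1),
          (PowerSeries.X : S) ^ (k^2) * (D (2*m) 0 k * D 2 k N) := by
    rw [add_mul, one_mul, Finset.sum_mul,
      show Finset.range (N+1) = insert 0 (Finset.Icc 1 N) from by ext x; simp; omega,
      Finset.sum_insert (by simp)]
    congr 1
    · simp [D]
    · refine Finset.sum_congr rfl fun k hk => ?_
      have hk1 : 1 ≤ k := (Finset.mem_Icc.1 hk).1
      have hkN : k ≤ N := (Finset.mem_Icc.1 hk).2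
      have hG : (∏ j ∈ Finset.Icc 1 k, ∑ i ∈ Finset.range m, (PowerSeries.X : S) ^ (2*i*j))
          * D 2 0 k = D (2*m) 0 k := by
        rw [D, D, Ioc_zero_eq_Icc, ← Finset.prod_mul_distrib]
        exact Finset.prod_congr rfl fun j _ => geom_aux m j
      calc ((PowerSeries.X : S) ^ (k^2) *
            ∏ j ∈ Finset.Icc 1 k, ∑ i ∈ Finset.range m, (PowerSeries.X : S) ^ (2*i*j)) * D 2 0 N
          = (PowerSeries.X : S) ^ (k^2) *
            (((∏ j ∈ Finset.Icc 1 k, ∑ i ∈ Finset.range m, (PowerSeries.X : S) ^ (2*i*j))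
              * D 2 0 k) * D 2 k N) := by rw [← D_mul (Nat.zero_le k) hkN]; ring
        _ = (PowerSeries.X : S) ^ (k^2) * (D (2*m) 0 k * D 2 k N) := by rw [hG]
  -- the double-sum computation
  have step1 : pim N ((∑ n ∈ Finset.range (N + 1),
        (PowerSeries.X : S) ^ (2 * m * n) *
          (∏ j ∈ Finset.range (N + 1),
            (1 - (PowerSeries.X : S) ^ (2 * m * n + 2 * m + 2 * m * j))) *
          (∏ j ∈ Finset.range (N + 1),
            (1 + (PowerSeries.X : S) ^ (2 * m * n + 1 + 2 * j)))) * (D 2 0 N * D (2*m) 0 N))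
      = ∑ n ∈ Finset.range (N+1), ∑ k ∈ Finset.range (N+1),
          pim N (((PowerSeries.X : S) ^ (k^2) * D 2 k N) *
            ((PowerSeries.X : S) ^ (2*m*(k+1)*n) * D (2*m) n N) * D (2*m) 0 N) := by
    rw [Finset.sum_mul, map_sum]
    refine Finset.sum_congr rfl fun n hn => ?_
    have hnN : n ≤ N := by have := Finset.mem_range.1 hn; omega
    have e1 : ((PowerSeries.X : S) ^ (2 * m * n) *
          (∏ j ∈ Finset.range (N + 1),
            (1 - (PowerSeries.X : S) ^ (2 * m * n + 2 * m + 2 * m * j))) *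
          (∏ j ∈ Finset.range (N + 1),
            (1 + (PowerSeries.X : S) ^ (2 * m * n + 1 + 2 * j)))) * (D 2 0 N * D (2*m) 0 N)
        = (PowerSeries.X : S) ^ (2 * m * n) *
          (∏ j ∈ Finset.range (N + 1),
            (1 - (PowerSeries.X : S) ^ (2 * m * n + 2 * m + 2 * m * j))) *
          ((∏ j ∈ Finset.range (N + 1),
            (1 + (PowerSeries.X : S) ^ (2 * m * n + 1 + 2 * j))) * D 2 0 N) *
          D (2*m) 0 N := by ring
    rw [e1, map_mul, map_mul, map_mul, hA n hnN, hB n, map_sum, Finset.mul_sum, Finset.sum_mul]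
    refine Finset.sum_congr rfl fun k hk => ?_
    rw [← map_mul, ← map_mul, ← map_mul]
    congr 1
    have hx : (PowerSeries.X : S) ^ (2*m*n) * (PowerSeries.X : S) ^ (k^2 + 2*m*n*k)
        = (PowerSeries.X : S) ^ (k^2) * (PowerSeries.X : S) ^ (2*m*(k+1)*n) := by
      rw [← pow_add, ← pow_add]; congr 1; ring
    calc (PowerSeries.X : S) ^ (2*m*n) * D (2*m) n N *
            ((PowerSeries.X : S) ^ (k^2 + 2*m*n*k) * D 2 k N) * D (2*m) 0 N
        = ((PowerSeries.X : S) ^ (2*m*n) * (PowerSeries.X : S) ^ (k^2 + 2*m*n*k)) *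
            (D (2*m) n N * D 2 k N * D (2*m) 0 N) := by ring
      _ = ((PowerSeries.X : S) ^ (k^2) * (PowerSeries.X : S) ^ (2*m*(k+1)*n)) *
            (D (2*m) n N * D 2 k N * D (2*m) 0 N) := by rw [hx]
      _ = ((PowerSeries.X : S) ^ (k^2) * D 2 k N) *
            ((PowerSeries.X : S) ^ (2*m*(k+1)*n) * D (2*m) n N) * D (2*m) 0 N := by ring
  have step3 : ∀ k ∈ Finset.range (N+1),
      (∑ n ∈ Finset.range (N+1),
        pim N (((PowerSeries.X : S) ^ (k^2) * D 2 k N) *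
          ((PowerSeries.X : S) ^ (2*m*(k+1)*n) * D (2*m) n N) * D (2*m) 0 N))
      = pim N (((PowerSeries.X : S) ^ (k^2) * (D (2*m) 0 k * D 2 k N)) * D (2*m) 0 N) := by
    intro k hk
    have hkN : k ≤ N := by have := Finset.mem_range.1 hk; omega
    rw [← map_sum]
    have e3 : (∑ n ∈ Finset.range (N+1),
          ((PowerSeries.X : S) ^ (k^2) * D 2 k N) *
            ((PowerSeries.X : S) ^ (2*m*(k+1)*n) * D (2*m) n N) * D (2*m) 0 N)
        = ((PowerSeries.X : S) ^ (k^2) * D 2 k N) *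
            (∑ n ∈ Finset.range (N+1),
              (PowerSeries.X : S) ^ (2*m*(k+1)*n) * D (2*m) n N) * D (2*m) 0 N := by
      rw [Finset.mul_sum, Finset.sum_mul]
    rw [e3]
    have h1 := hLB k hkN
    rw [map_mul] at h1
    have h2 : pim N (D (2*m) 0 N) = pim N (D (2*m) 0 k) * pim N (D (2*m) k N) := by
      rw [← map_mul, D_mul (Nat.zero_le k) hkN]
    simp only [map_mul]
    linear_combination (pim N ((PowerSeries.X : S) ^ (k^2)) * pim N (D 2 k N) *
        pim N (∑ n ∈ Finset.range (N+1),
          (PowerSeries.X : S) ^ (2*m*(k+1)*n) * D (2*m) n N)) * h2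
      + (pim N ((PowerSeries.X : S) ^ (k^2)) * pim N (D 2 k N) * pim N (D (2*m) 0 k)) * h1
  -- put everything together
  have hu : IsUnit (pim N (D 2 0 N * D (2*m) 0 N)) := by
    rw [map_mul]
    exact (isUnit_pim_D (N := N) one_le_two).mul (isUnit_pim_D (N := N) hm2)
  refine IsUnit.mul_right_cancel hu ?_
  rw [← map_mul, ← map_mul]
  calc pim N ((∑ n ∈ Finset.range (N + 1),
        (PowerSeries.X : S) ^ (2 * m * n) *
          (∏ j ∈ Finset.range (N + 1),
            (1 - (PowerSeries.X : S) ^ (2 * m * n + 2 * m + 2 * m * j))) *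
          (∏ j ∈ Finset.range (N + 1),
            (1 + (PowerSeries.X : S) ^ (2 * m * n + 1 + 2 * j)))) * (D 2 0 N * D (2*m) 0 N))
      = ∑ n ∈ Finset.range (N+1), ∑ k ∈ Finset.range (N+1),
          pim N (((PowerSeries.X : S) ^ (k^2) * D 2 k N) *
            ((PowerSeries.X : S) ^ (2*m*(k+1)*n) * D (2*m) n N) * D (2*m) 0 N) := step1
    _ = ∑ k ∈ Finset.range (N+1), ∑ n ∈ Finset.range (N+1),
          pim N (((PowerSeries.X : S) ^ (k^2) * D 2 k N) *
            ((PowerSeries.X : S) ^ (2*m*(k+1)*n) * D (2*m) n N) * D (2*m) 0 N) :=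
        Finset.sum_comm
    _ = ∑ k ∈ Finset.range (N+1),
          pim N (((PowerSeries.X : S) ^ (k^2) * (D (2*m) 0 k * D 2 k N)) * D (2*m) 0 N) :=
        Finset.sum_congr rfl step3
    _ = pim N ((∑ k ∈ Finset.range (N+1),
          (PowerSeries.X : S) ^ (k^2) * (D (2*m) 0 k * D 2 k N)) * D (2*m) 0 N) := by
        rw [Finset.sum_mul, map_sum]
    _ = pim N ((1 + ∑ k ∈ Finset.Icc 1 N, (PowerSeries.X : S) ^ (k ^ 2) *
          ∏ j ∈ Finset.Icc 1 k, ∑ i ∈ Finset.range m, (PowerSeries.X : S) ^ (2 * i * j))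
          * (D 2 0 N * D (2*m) 0 N)) := by
        rw [show (1 + ∑ k ∈ Finset.Icc 1 N, (PowerSeries.X : S) ^ (k ^ 2) *
            ∏ j ∈ Finset.Icc 1 k, ∑ i ∈ Finset.range m, (PowerSeries.X : S) ^ (2 * i * j))
            * (D 2 0 N * D (2*m) 0 N)
          = ((1 + ∑ k ∈ Finset.Icc 1 N, (PowerSeries.X : S) ^ (k ^ 2) *
            ∏ j ∈ Finset.Icc 1 k, ∑ i ∈ Finset.range m, (PowerSeries.X : S) ^ (2 * i * j))
            * D 2 0 N) * D (2*m) 0 N from by ring, hR]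

end
end AndrewsAux

/-- Andrews' identity
`∑_{n≥0} q^{2mn}(q^{2mn+2m};q^{2m})_∞(-q^{2mn+1};q²)_∞
  = 1 + ∑_{k≥1} q^{k²} ∏_{j=1}^k (1+q^{2j}+⋯+q^{2(m-1)j})`
as formal power series in `q` over `ℤ`.  Summands with index `> N` and factors of the
infinite products with index `j > N` have no effect on the `N`-th coefficient, so that
coefficient is computed from the displayed finite truncations. -/
theorem andrews_general (m : ℕ) (hm : 0 < m) (N : ℕ) :
    PowerSeries.coeff (R := ℤ) N
      (∑ n ∈ Finset.range (N + 1),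
        PowerSeries.X ^ (2 * m * n) *
          (∏ j ∈ Finset.range (N + 1),
            (1 - PowerSeries.X ^ (2 * m * n + 2 * m + 2 * m * j))) *
          (∏ j ∈ Finset.range (N + 1),
            (1 + PowerSeries.X ^ (2 * m * n + 1 + 2 * j)))) =
    PowerSeries.coeff (R := ℤ) N
      (1 + ∑ k ∈ Finset.Icc 1 N,
        PowerSeries.X ^ (k ^ 2) *
          ∏ j ∈ Finset.Icc 1 k, ∑ i ∈ Finset.range m, PowerSeries.X ^ (2 * i * j)) :=
  AndrewsAux.main_thm m hm N
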